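/- Suppose m is odd and i and j are both even. Then f_C is linear equivalent over F_q to the map (u,v) ↦ (u^{Q1+Q2+1}, v^{Q1+Q2+1}) on F_q × F_q; that is, there exist F_q-linear bijections L1 : F_q × F_q → F_{q^2} and L2 : F_{q^2} → F_q × F_q such that for all x in F_{q^2}, f_C(x) = L1(u^{Q1+Q2+1}, v^{Q1+Q2+1}) where (u,v) = L2(x). -/

import Mathlib

/-- Key polynomial identity in a commutative ring of characteristic 2 containing a
primitive cube root of unity `w`. -/
theorem fC_key_identity {F : Type*} [CommRing F] (A B C D U V w : F)
    (hw : w ^ 2 + w + 1 = 0) (h2 : (2 : F) = 0) :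
    (A*w^2+B*w)*(C*w^2+D*w)*(U*w^2+V*w) + (A*w^2+B*w)*(C*w+D*w^2)*(U*w+V*w^2)
      + (C*w^2+D*w)*(A*w+B*w^2)*(U*w+V*w^2) + (U*w^2+V*w)*(A*w+B*w^2)*(C*w+D*w^2)
      + (A*w+B*w^2)*(C*w+D*w^2)*(U*w+V*w^2)
    = A*C*U*w + B*D*V*w^2 := by
  linear_combination
    (A*C*U*w^4 + A*D*V*w^4 + B*C*V*w^4 + B*D*U*w^4 + B*D*V*w^4
      + 3*A*C*V*w^3 + 3*A*D*U*w^3 + 3*B*C*U*w^3 + 2*B*D*V*w^3 - A*C*U*w^3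
      + 2*A*D*V*w^2 + 2*B*C*V*w^2 + 2*B*D*U*w^2 + 3*A*C*U*w^2 - 2*A*C*V*w^2
      - 2*A*D*U*w^2 - 2*B*C*U*w^2 - 3*B*D*V*w^2
      + 2*B*D*V*w - A*C*U*w - 2*A*D*V*w - 2*B*C*V*w - 2*B*D*U*w
      - 2*A*C*U + 2*A*C*V + 2*A*D*U + 2*B*C*U) * hw
    + (- B*D*V*w + A*D*V*w + B*C*V*w + B*D*U*w + A*C*U*w + A*C*U - A*C*V*w
      - A*C*V - A*D*U*w - A*D*U - B*C*U*w - B*C*U) * h2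

theorem two_pow_mod_three_of_odd (m : ℕ) (hmo : Odd m) : 2 ^ m % 3 = 2 := by
  obtain ⟨k, rfl⟩ := hmo
  have h4 : 4 ^ k % 3 = 1 := by rw [Nat.pow_mod]; simp
  have : 2 ^ (2 * k + 1) = 2 * 4 ^ k := by rw [pow_succ, pow_mul]; ring
  rw [this, Nat.mul_mod, h4]

theorem two_pow_mod_three_of_even (i : ℕ) (hie : Even i) : 2 ^ i % 3 = 1 := by
  obtain ⟨k, rfl⟩ := hie
  have : 2 ^ (k + k) = 4 ^ k := by rw [← two_mul, pow_mul]; norm_num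
  rw [this, Nat.pow_mod]; simp

/-- Theorem C, case (i), linear equivalence part: for `m` odd and `i`, `j` both even,
`f_C` is linear equivalent over `F_q` to `(u, v) ↦ (u^{Q1+Q2+1}, v^{Q1+Q2+1})`
on `F_q × F_q`. -/
theorem fC_linear_equiv_of_odd
    (m i j : ℕ) (hm : 0 < m) (hi : 0 < i) (hj : 0 < j)
    (q Q1 Q2 : ℕ) (hq : q = 2 ^ m) (hQ1 : Q1 = 2 ^ i) (hQ2 : Q2 = 2 ^ j)
    (K F : Type*) [Field K] [Fintype K] [Field F] [Fintype F] [Algebra K F]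
    (hK : Fintype.card K = q) (hF : Fintype.card F = q ^ 2)
    (hmo : Odd m) (hie : Even i) (hje : Even j) :
    ∃ (L1 : (K × K) ≃ₗ[K] F) (L2 : F ≃ₗ[K] (K × K)),
      ∀ x : F,
        x ^ (q * (Q1 + Q2 + 1)) + x ^ (q * Q1 + Q2 + 1) + x ^ (q * Q2 + Q1 + 1) +
          x ^ (q + Q1 + Q2) + x ^ (Q1 + Q2 + 1) =
        L1 ((L2 x).1 ^ (Q1 + Q2 + 1), (L2 x).2 ^ (Q1 + Q2 + 1)) := by
  classical
  have hq3 : q % 3 = 2 := hq ▸ two_pow_mod_three_of_odd m hmo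
  have hQ13 : Q1 % 3 = 1 := hQ1 ▸ two_pow_mod_three_of_even i hie
  have hQ23 : Q2 % 3 = 1 := hQ2 ▸ two_pow_mod_three_of_even j hje
  have hqpos : 0 < q := by subst hq; positivity
  -- characteristic 2
  have h2 : (2 : F) = 0 := by
    have h0 : ((Fintype.card F : ℕ) : F) = 0 := FiniteField.cast_card_eq_zero F
    rw [hF, hq, ← pow_mul] at h0
    push_cast at h0
    exact pow_eq_zero_iff (by positivity) |>.mp h0
  have hring : ringChar F = 2 := CharP.ringChar_of_prime_eq_zero Nat.prime_two h2
  haveI : CharP F 2 := hring ▸ ringChar.charP F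
  have frob : ∀ (n : ℕ) (a b : F), (a + b) ^ 2 ^ n = a ^ 2 ^ n + b ^ 2 ^ n :=
    fun n a b => add_pow_char_pow a b 2 n
  -- a cube root of unity
  haveI : Fact (Nat.Prime 3) := ⟨by norm_num⟩
  have hdvd : 3 ∣ Fintype.card Fˣ := by
    rw [Fintype.card_units, hF]
    have h1 : q ^ 2 % 3 = 1 := by rw [Nat.pow_mod, hq3]
    have h2 : 1 ≤ q ^ 2 := Nat.one_le_pow _ _ hqpos
    omega
  obtain ⟨ζ, hζ⟩ := exists_prime_orderOf_dvd_card 3 hdvd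
  set ω : F := (ζ : F) with hωdef
  have hω3 : ω ^ 3 = 1 := by
    have h := pow_orderOf_eq_one ζ
    rw [hζ] at h
    rw [hωdef, ← Units.val_pow_eq_pow_val, h, Units.val_one]
  have hωne1 : ω ≠ 1 := by
    intro h
    have : ζ = 1 := Units.ext h
    rw [this, orderOf_one] at hζ; norm_num at hζ
  have hw : ω ^ 2 + ω + 1 = 0 := by
    have hfac : (ω - 1) * (ω ^ 2 + ω + 1) = 0 := by linear_combination hω3
    rcases mul_eq_zero.mp hfac with h | h
    · exact absurd (sub_eq_zero.mp h) hωne1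
    · exact h
  -- powers of ω
  have hωq : ω ^ q = ω ^ 2 := by
    obtain ⟨t, ht⟩ : ∃ t, q = 3 * t + 2 := ⟨q / 3, by omega⟩
    rw [ht, pow_add, pow_mul, hω3, one_pow, one_mul]
  have hωQ1 : ω ^ Q1 = ω := by
    obtain ⟨t, ht⟩ : ∃ t, Q1 = 3 * t + 1 := ⟨Q1 / 3, by omega⟩
    rw [ht, pow_add, pow_mul, hω3, one_pow, one_mul, pow_one]
  have hωQ2 : ω ^ Q2 = ω := by
    obtain ⟨t, ht⟩ : ∃ t, Q2 = 3 * t + 1 := ⟨Q2 / 3, by omega⟩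
    rw [ht, pow_add, pow_mul, hω3, one_pow, one_mul, pow_one]
  have hω4 : ω ^ 4 = ω := by
    have : ω ^ 4 = ω ^ 3 * ω := by ring
    rw [this, hω3, one_mul]
  have hω2q : (ω ^ 2) ^ q = ω := by
    rw [← pow_mul, mul_comm, pow_mul, hωq, ← pow_mul]
    norm_num [hω4]
  have hω2Q1 : (ω ^ 2) ^ Q1 = ω ^ 2 := by
    rw [← pow_mul, mul_comm, pow_mul, hωQ1]
  have hω2Q2 : (ω ^ 2) ^ Q2 = ω ^ 2 := by
    rw [← pow_mul, mul_comm, pow_mul, hωQ2]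
  -- ω is not in the image of K
  have hcube : ∀ c : K, c ^ 3 = 1 → c = 1 := by
    intro c hc
    have hc0 : c ≠ 0 := by
      rintro rfl; rw [zero_pow (by norm_num)] at hc; exact zero_ne_one hc
    set cu : Kˣ := Units.mk0 c hc0 with hcu
    have hcu3 : cu ^ 3 = 1 := Units.ext (by simpa [hcu] using hc)
    have hdvd3 : orderOf cu ∣ 3 := orderOf_dvd_of_pow_eq_one hcu3
    have hdvdc : orderOf cu ∣ Fintype.card Kˣ := orderOf_dvd_card
    rw [Fintype.card_units, hK] at hdvdc
    rcases (Nat.dvd_prime Nat.prime_three).mp hdvd3 with h | h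
    · have : cu = 1 := orderOf_eq_one_iff.mp h
      simpa [hcu] using congrArg Units.val this
    · exfalso
      rw [h] at hdvdc
      obtain ⟨t, ht⟩ := hdvdc
      omega
  have hωnot : ∀ c : K, algebraMap K F c ≠ ω := by
    intro c hcω
    have hc3 : c ^ 3 = 1 := by
      apply (algebraMap K F).injective
      rw [map_pow, map_one, hcω, hω3]
    have := hcube c hc3
    rw [this, map_one] at hcω
    exact hωne1 hcω.symm
  -- the linear map
  set Lm : (K × K) →ₗ[K] F :=
    (LinearMap.fst K K K).smulRight ω + (LinearMap.snd K K K).smulRight (ω ^ 2) with hLmdef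
  have hLm : ∀ p : K × K, Lm p = algebraMap K F p.1 * ω + algebraMap K F p.2 * ω ^ 2 := by
    intro p; simp [hLmdef, Algebra.smul_def]
  have hω2 : ω ^ 2 = ω + 1 := by linear_combination hw - (ω + 1) * h2
  have h0 : ∀ p : K × K, Lm p = 0 → p = 0 := by
    rintro ⟨s, t⟩ h
    rw [hLm] at h
    simp only at h
    by_cases hst : s + t = 0
    · have hST : algebraMap K F s + algebraMap K F t = 0 := by
        rw [← map_add, hst, map_zero]
      have hT : algebraMap K F t = 0 := by
        rw [hω2] at h
        linear_combination h - ω * hST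
      have ht0 : t = 0 := by
        apply (algebraMap K F).injective; rw [hT, map_zero]
      have hs0 : s = 0 := by rw [ht0, add_zero] at hst; exact hst
      simp [hs0, ht0, Prod.ext_iff]
    · exfalso
      apply hωnot (-(t / (s + t)))
      have hST : algebraMap K F s + algebraMap K F t ≠ 0 := by
        rw [← map_add]
        intro h'
        exact hst ((algebraMap K F).injective (by rw [h', map_zero]))
      rw [hω2] at h
      rw [map_neg, map_div₀, map_add, ← neg_div, div_eq_iff hST]
      linear_combination -h
  have hinj : Function.Injective Lm := by
    rw [injective_iff_map_eq_zero]; exact fun a ha => h0 a ha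
  have hcards : Fintype.card (K × K) = Fintype.card F := by
    rw [Fintype.card_prod, hK, hF]; ring
  have hbij : Function.Bijective Lm :=
    (Fintype.bijective_iff_injective_and_card Lm).mpr ⟨hinj, hcards⟩
  refine ⟨LinearEquiv.ofBijective Lm hbij, (LinearEquiv.ofBijective Lm hbij).symm, ?_⟩
  intro x
  set L1 := LinearEquiv.ofBijective Lm hbij with hL1
  set u := (L1.symm x).1 with hu
  set v := (L1.symm x).2 with hv
  set U := algebraMap K F u with hU
  set V := algebraMap K F v with hV
  have hx : x = U * ω + V * ω ^ 2 := by
    have h1 : L1 (L1.symm x) = x := L1.apply_symm_apply x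
    have h2' : L1 (L1.symm x) = Lm (L1.symm x) := rfl
    rw [h2', hLm] at h1
    exact h1.symm
  have hUq : ∀ c : K, (algebraMap K F c) ^ q = algebraMap K F c := by
    intro c; rw [← map_pow, ← hK, FiniteField.pow_card]
  have hxq : x ^ q = U * ω ^ 2 + V * ω := by
    calc x ^ q = (U * ω + V * ω ^ 2) ^ q := by rw [← hx]
      _ = (U * ω) ^ q + (V * ω ^ 2) ^ q := by rw [hq]; exact frob m _ _
      _ = U ^ q * ω ^ q + V ^ q * (ω ^ 2) ^ q := by rw [mul_pow, mul_pow]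
      _ = U * ω ^ 2 + V * ω := by rw [hU, hV, hUq, hUq, hωq, hω2q]
  have hxQ1 : x ^ Q1 = U ^ Q1 * ω + V ^ Q1 * ω ^ 2 := by
    calc x ^ Q1 = (U * ω + V * ω ^ 2) ^ Q1 := by rw [← hx]
      _ = (U * ω) ^ Q1 + (V * ω ^ 2) ^ Q1 := by rw [hQ1]; exact frob i _ _
      _ = U ^ Q1 * ω ^ Q1 + V ^ Q1 * (ω ^ 2) ^ Q1 := by rw [mul_pow, mul_pow]
      _ = U ^ Q1 * ω + V ^ Q1 * ω ^ 2 := by rw [hωQ1, hω2Q1]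
  have hxQ2 : x ^ Q2 = U ^ Q2 * ω + V ^ Q2 * ω ^ 2 := by
    calc x ^ Q2 = (U * ω + V * ω ^ 2) ^ Q2 := by rw [← hx]
      _ = (U * ω) ^ Q2 + (V * ω ^ 2) ^ Q2 := by rw [hQ2]; exact frob j _ _
      _ = U ^ Q2 * ω ^ Q2 + V ^ Q2 * (ω ^ 2) ^ Q2 := by rw [mul_pow, mul_pow]
      _ = U ^ Q2 * ω + V ^ Q2 * ω ^ 2 := by rw [hωQ2, hω2Q2]
  have hyQ1 : (x ^ q) ^ Q1 = U ^ Q1 * ω ^ 2 + V ^ Q1 * ω := by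
    calc (x ^ q) ^ Q1 = (U * ω ^ 2 + V * ω) ^ Q1 := by rw [hxq]
      _ = (U * ω ^ 2) ^ Q1 + (V * ω) ^ Q1 := by rw [hQ1]; exact frob i _ _
      _ = U ^ Q1 * (ω ^ 2) ^ Q1 + V ^ Q1 * ω ^ Q1 := by rw [mul_pow, mul_pow]
      _ = U ^ Q1 * ω ^ 2 + V ^ Q1 * ω := by rw [hωQ1, hω2Q1]
  have hyQ2 : (x ^ q) ^ Q2 = U ^ Q2 * ω ^ 2 + V ^ Q2 * ω := by
    calc (x ^ q) ^ Q2 = (U * ω ^ 2 + V * ω) ^ Q2 := by rw [hxq]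
      _ = (U * ω ^ 2) ^ Q2 + (V * ω) ^ Q2 := by rw [hQ2]; exact frob j _ _
      _ = U ^ Q2 * (ω ^ 2) ^ Q2 + V ^ Q2 * ω ^ Q2 := by rw [mul_pow, mul_pow]
      _ = U ^ Q2 * ω ^ 2 + V ^ Q2 * ω := by rw [hωQ2, hω2Q2]
  have e1 : x ^ (q * (Q1 + Q2 + 1)) = (x ^ q) ^ Q1 * (x ^ q) ^ Q2 * x ^ q := by
    rw [pow_mul, pow_add, pow_add, pow_one]
  have e2 : x ^ (q * Q1 + Q2 + 1) = (x ^ q) ^ Q1 * x ^ Q2 * x := by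
    rw [pow_add, pow_add, pow_mul, pow_one]
  have e3 : x ^ (q * Q2 + Q1 + 1) = (x ^ q) ^ Q2 * x ^ Q1 * x := by
    rw [pow_add, pow_add, pow_mul, pow_one]
  have e4 : x ^ (q + Q1 + Q2) = x ^ q * x ^ Q1 * x ^ Q2 := by
    rw [pow_add, pow_add]
  have e5 : x ^ (Q1 + Q2 + 1) = x ^ Q1 * x ^ Q2 * x := by
    rw [pow_add, pow_add, pow_one]
  have eR : L1 (u ^ (Q1 + Q2 + 1), v ^ (Q1 + Q2 + 1))
      = (U ^ Q1 * U ^ Q2 * U) * ω + (V ^ Q1 * V ^ Q2 * V) * ω ^ 2 := by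
    have h2' : L1 (u ^ (Q1 + Q2 + 1), v ^ (Q1 + Q2 + 1))
        = Lm (u ^ (Q1 + Q2 + 1), v ^ (Q1 + Q2 + 1)) := rfl
    rw [h2', hLm]
    simp only [pow_add, pow_one, map_mul, map_pow]
    rfl
  rw [e1, e2, e3, e4, e5, hyQ1, hyQ2, hxQ1, hxQ2, hxq, hx, eR]
  linear_combination fC_key_identity (U ^ Q1) (V ^ Q1) (U ^ Q2) (V ^ Q2) U V ω hw h2
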